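/- Pointwise commutator bound for the regular nonlinearity: for all t ∈ ℝ, all δ with 0 ≤ δ ≤ 1, and every integer m ≥ 1, writing c_m(t) = cos(2π m t / N), one has |c_m(t) · y(t + δ) − c_m(t − δ) · y(t)| ≤ (2π L_f / N) · ( ‖∂x‖₁ + m · ‖x‖₁ ). -/

import Mathlib

open Finset Real

lemma sin_lip' (a b : ℝ) : |Real.sin a - Real.sin b| ≤ |a - b| := by
  rw [Real.sin_sub_sin, abs_mul, abs_mul]
  have h1 : |Real.cos ((a + b) / 2)| ≤ 1 := Real.abs_cos_le_one _
  have h2 : |Real.sin ((a - b) / 2)| ≤ |(a - b) / 2| := Real.abs_sin_le_abs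
  have h3 : |(2:ℝ)| = 2 := by norm_num
  rw [h3]
  have h4 : |(a - b) / 2| = |a - b| / 2 := by rw [abs_div]; norm_num
  nlinarith [abs_nonneg (Real.sin ((a - b) / 2)), abs_nonneg (Real.cos ((a + b) / 2)),
    abs_nonneg (a - b)]

lemma cos_lip' (a b : ℝ) : |Real.cos a - Real.cos b| ≤ |a - b| := by
  rw [Real.cos_sub_cos, abs_mul, abs_mul]
  have h1 : |Real.sin ((a + b) / 2)| ≤ 1 := Real.abs_sin_le_one _
  have h2 : |Real.sin ((a - b) / 2)| ≤ |(a - b) / 2| := Real.abs_sin_le_abs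
  have h3 : |(-2:ℝ)| = 2 := by norm_num
  rw [h3]
  have h4 : |(a - b) / 2| = |a - b| / 2 := by rw [abs_div]; norm_num
  nlinarith [abs_nonneg (Real.sin ((a - b) / 2)), abs_nonneg (Real.sin ((a + b) / 2)),
    abs_nonneg (a - b)]

/-- pointwise commutator bound for the regular nonlinearity. -/
theorem regular_nonlinearity_pointwise_commutator_bound
    (N B : ℕ) (hN : 1 ≤ N) (hB : 1 ≤ B)
    (x0 : ℝ) (xa xb : ℕ → ℝ) (x : ℝ → ℝ)
    (hx : ∀ t : ℝ, x t = x0 + ∑ m ∈ Finset.Icc 1 B,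
      (xa m * Real.cos (2 * Real.pi * m * t / N)
        + xb m * Real.sin (2 * Real.pi * m * t / N)))
    (f : ℝ → ℝ) (Lf : ℝ) (hLf : 0 ≤ Lf)
    (hf : ∀ a b : ℝ, |f a - f b| ≤ Lf * |a - b|) (hf0 : f 0 = 0)
    (y : ℝ → ℝ) (hy : ∀ t : ℝ, y t = f (x t)) :
    ∀ (t δ : ℝ), 0 ≤ δ → δ ≤ 1 → ∀ m : ℕ, 1 ≤ m →
      |Real.cos (2 * Real.pi * m * t / N) * y (t + δ)
        - Real.cos (2 * Real.pi * m * (t - δ) / N) * y t|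
      ≤ (2 * Real.pi * Lf / N) *
          ((∑ k ∈ Finset.Icc 1 B, (k : ℝ) * (|xa k| + |xb k|))
            + (m : ℝ) * (|x0| + ∑ k ∈ Finset.Icc 1 B, (|xa k| + |xb k|))) := by
  intro t δ hδ0 hδ1 m hm
  have hN0 : (0:ℝ) < N := by exact_mod_cast Nat.lt_of_lt_of_le Nat.zero_lt_one hN
  have hπ : (0:ℝ) < Real.pi := Real.pi_pos
  set S1 : ℝ := ∑ k ∈ Finset.Icc 1 B, (k : ℝ) * (|xa k| + |xb k|) with hS1
  set S0 : ℝ := |x0| + ∑ k ∈ Finset.Icc 1 B, (|xa k| + |xb k|) with hS0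
  -- bound |x (t+δ) - x t|
  have hxdiff : |x (t + δ) - x t| ≤ 2 * Real.pi * δ / N * S1 := by
    rw [hx, hx]
    have h1 : x0 + (∑ k ∈ Finset.Icc 1 B,
        (xa k * Real.cos (2 * Real.pi * k * (t + δ) / N)
          + xb k * Real.sin (2 * Real.pi * k * (t + δ) / N)))
        - (x0 + ∑ k ∈ Finset.Icc 1 B,
        (xa k * Real.cos (2 * Real.pi * k * t / N)
          + xb k * Real.sin (2 * Real.pi * k * t / N)))
        = ∑ k ∈ Finset.Icc 1 B,
        ((xa k * Real.cos (2 * Real.pi * k * (t + δ) / N)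
          + xb k * Real.sin (2 * Real.pi * k * (t + δ) / N))
          - (xa k * Real.cos (2 * Real.pi * k * t / N)
          + xb k * Real.sin (2 * Real.pi * k * t / N))) := by
      rw [Finset.sum_sub_distrib]; ring
    rw [h1]
    refine le_trans (Finset.abs_sum_le_sum_abs _ _) ?_
    rw [hS1, Finset.mul_sum]
    refine Finset.sum_le_sum ?_
    intro k hk
    have harg : 2 * Real.pi * k * (t + δ) / N - 2 * Real.pi * k * t / N
        = 2 * Real.pi * k * δ / N := by field_simp; ring
    have hargpos : (0:ℝ) ≤ 2 * Real.pi * k * δ / N := by positivity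
    have hc : |Real.cos (2 * Real.pi * k * (t + δ) / N)
        - Real.cos (2 * Real.pi * k * t / N)| ≤ 2 * Real.pi * k * δ / N := by
      refine le_trans (cos_lip' _ _) ?_
      rw [harg, abs_of_nonneg hargpos]
    have hs : |Real.sin (2 * Real.pi * k * (t + δ) / N)
        - Real.sin (2 * Real.pi * k * t / N)| ≤ 2 * Real.pi * k * δ / N := by
      refine le_trans (sin_lip' _ _) ?_
      rw [harg, abs_of_nonneg hargpos]
    calc |(xa k * Real.cos (2 * Real.pi * k * (t + δ) / N)
          + xb k * Real.sin (2 * Real.pi * k * (t + δ) / N))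
          - (xa k * Real.cos (2 * Real.pi * k * t / N)
          + xb k * Real.sin (2 * Real.pi * k * t / N))|
        = |xa k * (Real.cos (2 * Real.pi * k * (t + δ) / N)
            - Real.cos (2 * Real.pi * k * t / N))
          + xb k * (Real.sin (2 * Real.pi * k * (t + δ) / N)
            - Real.sin (2 * Real.pi * k * t / N))| := by ring_nf
      _ ≤ |xa k| * |Real.cos (2 * Real.pi * k * (t + δ) / N)
            - Real.cos (2 * Real.pi * k * t / N)|
          + |xb k| * |Real.sin (2 * Real.pi * k * (t + δ) / N)
            - Real.sin (2 * Real.pi * k * t / N)| := by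
          refine le_trans (abs_add_le _ _) ?_
          rw [abs_mul, abs_mul]
      _ ≤ |xa k| * (2 * Real.pi * k * δ / N) + |xb k| * (2 * Real.pi * k * δ / N) := by
          gcongr <;> positivity
      _ = 2 * Real.pi * δ / N * ((k:ℝ) * (|xa k| + |xb k|)) := by ring
  -- bound |x t|
  have hxabs : |x t| ≤ S0 := by
    rw [hx, hS0]
    refine le_trans (abs_add_le _ _) ?_
    gcongr
    refine le_trans (Finset.abs_sum_le_sum_abs _ _) ?_
    refine Finset.sum_le_sum ?_
    intro k hk
    refine le_trans (abs_add_le _ _) ?_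
    rw [abs_mul, abs_mul]
    exact add_le_add (mul_le_of_le_one_right (abs_nonneg _) (Real.abs_cos_le_one _))
      (mul_le_of_le_one_right (abs_nonneg _) (Real.abs_sin_le_one _))
  have hS1nn : 0 ≤ S1 := by
    rw [hS1]; refine Finset.sum_nonneg fun k _ => by positivity
  have hS0nn : 0 ≤ S0 := le_trans (abs_nonneg _) hxabs
  -- bound |y (t+δ) - y t|
  have hydiff : |y (t + δ) - y t| ≤ 2 * Real.pi * Lf / N * S1 := by
    rw [hy, hy]
    refine le_trans (hf _ _) ?_
    calc Lf * |x (t + δ) - x t| ≤ Lf * (2 * Real.pi * δ / N * S1) := by gcongr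
      _ ≤ 2 * Real.pi * Lf / N * S1 := by
          have : Lf * (2 * Real.pi * δ / N * S1) = (2 * Real.pi * Lf / N * S1) * δ := by ring
          rw [this]
          nlinarith [mul_nonneg (mul_nonneg (by positivity : (0:ℝ) ≤ 2 * Real.pi * Lf / N) hS1nn) (sub_nonneg.mpr hδ1)]
  -- bound |y t|
  have hyabs : |y t| ≤ Lf * S0 := by
    rw [hy]
    have := hf (x t) 0
    rw [hf0, sub_zero, sub_zero] at this
    exact le_trans this (by gcongr)
  -- bound cos difference
  have hcdiff : |Real.cos (2 * Real.pi * m * t / N)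
      - Real.cos (2 * Real.pi * m * (t - δ) / N)| ≤ 2 * Real.pi * m / N := by
    refine le_trans (cos_lip' _ _) ?_
    have harg : 2 * Real.pi * m * t / N - 2 * Real.pi * m * (t - δ) / N
        = 2 * Real.pi * m * δ / N := by field_simp; ring
    rw [harg, abs_of_nonneg (by positivity)]
    have : 2 * Real.pi * m * δ ≤ 2 * Real.pi * m * 1 := by
      gcongr
    calc 2 * Real.pi * m * δ / N ≤ 2 * Real.pi * m * 1 / N := by gcongr
      _ = 2 * Real.pi * m / N := by ring
  -- assemble
  have key : Real.cos (2 * Real.pi * m * t / N) * y (t + δ)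
      - Real.cos (2 * Real.pi * m * (t - δ) / N) * y t
      = Real.cos (2 * Real.pi * m * t / N) * (y (t + δ) - y t)
        + (Real.cos (2 * Real.pi * m * t / N)
          - Real.cos (2 * Real.pi * m * (t - δ) / N)) * y t := by ring
  rw [key]
  refine le_trans (abs_add_le _ _) ?_
  rw [abs_mul, abs_mul]
  have h1 : |Real.cos (2 * Real.pi * m * t / N)| * |y (t + δ) - y t|
      ≤ 1 * (2 * Real.pi * Lf / N * S1) :=
    mul_le_mul (Real.abs_cos_le_one _) hydiff (abs_nonneg _) zero_le_one
  have h2 : |Real.cos (2 * Real.pi * m * t / N)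
      - Real.cos (2 * Real.pi * m * (t - δ) / N)| * |y t|
      ≤ (2 * Real.pi * m / N) * (Lf * S0) :=
    mul_le_mul hcdiff hyabs (abs_nonneg _) (by positivity)
  calc _ ≤ 1 * (2 * Real.pi * Lf / N * S1) + (2 * Real.pi * m / N) * (Lf * S0) :=
        add_le_add h1 h2
    _ = (2 * Real.pi * Lf / N) * (S1 + (m:ℝ) * S0) := by field_simp
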